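/- Let s_rep(p₁), s_rep(p₂) ≥ 1 and define the move-seat assorter a(b) = 1/2 + (s_rep(p₁)+1)/(2·s_rep(p₂)) if b is for p₂, 0 if b is for p₁, and 1/2 otherwise. Then (1/n)·Σ_{b∈B} a(b) > 1/2 if and only if v(p₂)/s_rep(p₂) > v(p₁)/(s_rep(p₁)+1), where v(p) counts ballots for party p. -/
import Mathlib

lemma move_seat_sum {P : Type*} [DecidableEq P]
    (p₁ p₂ : P) (hp : p₁ ≠ p₂) (x : ℝ) (a : Option P → ℝ)
    (ha : ∀ b, a b = if b = some p₂ then 1 / 2 + x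
      else if b = some p₁ then 0 else 1 / 2) (B : List (Option P)) :
    (B.map a).sum = (B.length : ℝ) / 2 + (B.count (some p₂) : ℝ) * x
      - (B.count (some p₁) : ℝ) / 2 := by
  induction B with
  | nil => simp
  | cons b t ih =>
    simp only [List.map_cons, List.sum_cons, List.length_cons, List.count_cons, ih, ha b]
    have h12 : (some p₁ : Option P) ≠ some p₂ := by simpa using hp
    by_cases h2 : b = some p₂
    · subst h2
      simp [h12.symm, Ne.symm hp]
      push_cast
      ring
    · by_cases h1 : b = some p₁
      · subst h1
        simp [h12, hp]
        push_cast
        ring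
      · simp [h1, h2, Ne.symm h1, Ne.symm h2]
        push_cast
        ring

/-- The move-seat assorter (`1/2 + (s_rep p₁ + 1)/(2 s_rep p₂)` on ballots for `p₂`,
`0` on ballots for `p₁`, `1/2` otherwise) has mean exceeding `1/2` iff
`v p₂ / s_rep p₂ > v p₁ / (s_rep p₁ + 1)`. -/
theorem move_seat_assorter {P : Type*} [DecidableEq P]
    (B : List (Option P)) (hB : B ≠ []) (p₁ p₂ : P) (hp : p₁ ≠ p₂)
    (s₁ s₂ : ℕ) (hs₁ : 1 ≤ s₁) (hs₂ : 1 ≤ s₂)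
    (a : Option P → ℝ)
    (ha : ∀ b, a b = if b = some p₂ then 1 / 2 + ((s₁ : ℝ) + 1) / (2 * (s₂ : ℝ))
      else if b = some p₁ then 0 else 1 / 2) :
    (1 / (B.length : ℝ)) * ((B.map a).sum) > 1 / 2 ↔
      (B.count (some p₂) : ℝ) / (s₂ : ℝ) > (B.count (some p₁) : ℝ) / ((s₁ : ℝ) + 1) := by
  have hn : (0 : ℝ) < (B.length : ℝ) := by
    have := List.length_pos_iff.mpr hB
    exact_mod_cast this
  have hs2 : (0 : ℝ) < (s₂ : ℝ) := by exact_mod_cast hs₂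
  have hs1 : (0 : ℝ) < (s₁ : ℝ) + 1 := by positivity
  rw [move_seat_sum p₁ p₂ hp _ a ha B]
  simp only [gt_iff_lt]
  rw [div_lt_div_iff₀ hs1 hs2, div_mul_eq_mul_div, lt_div_iff₀ hn]
  have e : ((s₁:ℝ)+1)/(2*(s₂:ℝ)) * (2*(s₂:ℝ)) = (s₁:ℝ)+1 := div_mul_cancel₀ _ (by positivity)
  have e2 : (0:ℝ) < ((s₁:ℝ)+1)/(2*(s₂:ℝ)) := by positivity
  constructor
  · intro h; nlinarith
  · intro h; nlinarith
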